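/- Let λ = (λ_1, …, λ_r) be a pre-diagram and let δ be a pre-diagram obtained from λ by a finite (possibly empty) sequence of moves, such that no move is applicable to δ. Then: (1) the multiset of hook numbers of δ equals the multiset of hook numbers of λ; and (2) δ is nonincreasing (i.e. a Young diagram) if and only if the hook numbers λ^{(1)}, …, λ^{(r)} of λ are pairwise distinct. -/

import Mathlib

/-- A pre-diagram: a finite sequence of nonnegative integers whose last entry is nonzero
and which has at most one ascent (index `i` with `λ_{i+1} > λ_i`). -/
def IsPreDiagram (l : List ℕ) : Prop :=
  (∀ h : l ≠ [], l.getLast h ≠ 0) ∧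
    (List.range (l.length - 1)).countP
      (fun i => decide (l.getD i 0 < l.getD (i + 1) 0)) ≤ 1

/-- The move `R_j` (0-indexed: acting on positions `j, j+1`) is applicable. -/
def MoveApplicable (l : List ℕ) (j : ℕ) : Prop :=
  j + 1 < l.length ∧ l.getD j 0 + 2 ≤ l.getD (j + 1) 0

/-- The result of applying the move `R_j`: the pair `(λ_j, λ_{j+1})` is replaced by
`(λ_{j+1} - 1, λ_j + 1)`. -/
def applyMove (l : List ℕ) (j : ℕ) : List ℕ :=
  (l.set j (l.getD (j + 1) 0 - 1)).set (j + 1) (l.getD j 0 + 1)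

/-- `l'` is obtained from `l` by one applicable move. -/
def MoveRel (l l' : List ℕ) : Prop := ∃ j, MoveApplicable l j ∧ l' = applyMove l j

/-- The hook numbers `λ^{(i)} = λ_i + r − i`, `1 ≤ i ≤ r`, of a pre-diagram of length `r`. -/
def hooksList (l : List ℕ) : List ℕ :=
  (List.range l.length).map fun idx => l.getD idx 0 + (l.length - 1 - idx)

lemma hooksList_length (l : List ℕ) : (hooksList l).length = l.length := by
  simp [hooksList]

lemma hooksList_getElem (l : List ℕ) (i : ℕ) (h : i < (hooksList l).length) :
    (hooksList l)[i] = l.getD i 0 + (l.length - 1 - i) := by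
  simp [hooksList]

lemma perm_swap_adj (L : List ℕ) (j : ℕ) (h : j + 1 < L.length) :
    ((L.set j (L.getD (j+1) 0)).set (j+1) (L.getD j 0)).Perm L := by
  induction L generalizing j with
  | nil => simp at h
  | cons x t ih =>
    cases j with
    | zero =>
      cases t with
      | nil => simp at h
      | cons y s => simpa using List.Perm.swap x y s
    | succ j =>
      simp only [List.set_cons_succ, List.getD_cons_succ]
      exact (ih j (by simpa using h)).cons x

lemma applyMove_length (l : List ℕ) (j : ℕ) : (applyMove l j).length = l.length := by
  simp [applyMove]

lemma move_hooks_perm {l l' : List ℕ} (h : MoveRel l l') :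
    (hooksList l').Perm (hooksList l) := by
  obtain ⟨j, ⟨hj, hle⟩, rfl⟩ := h
  have key : hooksList (applyMove l j) =
      ((hooksList l).set j ((hooksList l).getD (j+1) 0)).set (j+1)
        ((hooksList l).getD j 0) := by
    have hlenh : (hooksList l).length = l.length := hooksList_length l
    have hA : (hooksList l).getD j 0 = l.getD j 0 + (l.length - 1 - j) := by
      rw [List.getD_eq_getElem _ 0 (by omega), hooksList_getElem]
    have hB : (hooksList l).getD (j+1) 0 = l.getD (j+1) 0 + (l.length - 1 - (j+1)) := by
      rw [List.getD_eq_getElem _ 0 (by omega), hooksList_getElem]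
    apply List.ext_getElem
    · simp [hooksList_length, applyMove]
    · intro i h1 h2
      have hil : i < l.length := by
        simpa [hooksList_length, applyMove] using h1
      have hget : (applyMove l j).getD i 0 =
          if i = j + 1 then l.getD j 0 + 1
          else if i = j then l.getD (j+1) 0 - 1 else l.getD i 0 := by
        rw [List.getD_eq_getElem _ 0 (by rw [applyMove_length]; omega)]
        simp only [applyMove, List.getElem_set]
        split_ifs with h1' h2' <;>
          first
          | rfl
          | omega
          | (rw [List.getD_eq_getElem _ 0 hil])
      rw [hooksList_getElem _ i (by rwa [hooksList_length, applyMove_length]),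
        List.getElem_set, List.getElem_set, hooksList_getElem, hget,
        applyMove_length, hA, hB]
      split_ifs <;> omega
  rw [key]
  exact perm_swap_adj _ j (by rw [hooksList_length]; omega)

lemma steps_perm {l d : List ℕ} (h : Relation.ReflTransGen MoveRel l d) :
    (hooksList d).Perm (hooksList l) := by
  induction h with
  | refl => exact List.Perm.refl _
  | tail _ h ih => exact (move_hooks_perm h).trans ih

lemma terminal_sorted_iff (d : List ℕ) (hterm : ∀ j : ℕ, ¬ MoveApplicable d j) :
    d.Pairwise (· ≥ ·) ↔ (hooksList d).Nodup := by
  have hlen := hooksList_length d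
  constructor
  · intro hs
    rw [List.nodup_iff_injective_get]
    have key : ∀ a b : ℕ, (hab : a < b) → (hb : b < (hooksList d).length) →
        (hooksList d)[b]'hb < (hooksList d)[a]'(by omega) := by
      intro a b hab hb
      rw [hooksList_getElem, hooksList_getElem]
      have hb' : b < d.length := by rwa [hlen] at hb
      have hba : d.getD b 0 ≤ d.getD a 0 := by
        have h2 := List.pairwise_iff_get.mp hs ⟨a, by omega⟩ ⟨b, hb'⟩ hab
        rw [List.getD_eq_getElem _ 0 hb', List.getD_eq_getElem _ 0 (by omega)]
        simpa using h2
      omega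
    intro i k heq
    simp only [List.get_eq_getElem] at heq
    rcases lt_trichotomy (i : ℕ) (k : ℕ) with h | h | h
    · have := key i k h k.isLt; omega
    · exact Fin.ext h
    · have := key k i h i.isLt; omega
  · intro hnd
    rw [← List.isChain_iff_pairwise, List.isChain_iff_getElem]
    intro i hi
    have h1 : i + 1 < d.length := by omega
    have h2 : d.getD (i + 1) 0 < d.getD i 0 + 2 := by
      have := hterm i
      simp only [MoveApplicable, not_and, not_le] at this
      exact this h1
    by_contra hcon
    push_neg at hcon
    have heqv : d.getD (i + 1) 0 = d.getD i 0 + 1 := by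
      rw [List.getD_eq_getElem _ 0 h1, List.getD_eq_getElem _ 0 (by omega)] at h2 ⊢
      omega
    have heq : (hooksList d)[i]'(by omega) = (hooksList d)[i+1]'(by omega) := by
      rw [hooksList_getElem, hooksList_getElem]
      omega
    have hinj := List.nodup_iff_injective_get.mp hnd
      (a₁ := ⟨i, by omega⟩) (a₂ := ⟨i+1, by omega⟩) (by simpa using heq)
    simp [Fin.ext_iff] at hinj


/-- If `δ` is obtained from a pre-diagram `λ` by a finite sequence of moves and no move
applies to `δ`, then `δ` has the same multiset of hook numbers as `λ`, and `δ` is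
nonincreasing (a Young diagram) iff the hook numbers of `λ` are pairwise distinct. -/
theorem wrapping_hooks (l d : List ℕ) (hl : IsPreDiagram l)
    (hsteps : Relation.ReflTransGen MoveRel l d)
    (hterm : ∀ j : ℕ, ¬ MoveApplicable d j) :
    (hooksList d : Multiset ℕ) = (hooksList l : Multiset ℕ) ∧
    (d.Pairwise (· ≥ ·) ↔ (hooksList l).Nodup) := by
  have hperm := steps_perm hsteps
  exact ⟨Multiset.coe_eq_coe.mpr hperm,
    by rw [terminal_sorted_iff d hterm, hperm.nodup_iff]⟩
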